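/- Let G be a connected graph with minimum degree at least 2, let H be a connected factor of G with 1 ≤ deg_H(v) < deg_G(v) for all v, and let B : V(G) → {0,1} be a function with an even number of vertices mapped to 1. Then G has a factor F such that deg_F(v) ≡ B(v) (mod 2) for every vertex v. -/

import Mathlib

open SimpleGraph
open scoped Classical

/-- The degree of `v` in `H`, defined as the cardinality of its neighbor set. -/
noncomputable def edeg {V : Type*} (H : SimpleGraph V) (v : V) : ℕ := (H.neighborSet v).ncard

/-- A factor of `G`: a spanning subgraph with all degrees at least 1. -/
def IsFactor {V : Type*} (G H : SimpleGraph V) : Prop :=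
  H ≤ G ∧ ∀ v, 1 ≤ edeg H v

/-- An `X`-parity-factor of `G`: a factor whose odd-degree vertices are exactly `X`. -/
def IsParityFactor {V : Type*} (G H : SimpleGraph V) (X : Set V) : Prop :=
  IsFactor G H ∧ ∀ v, (Odd (edeg H v) ↔ v ∈ X)

/-- `G` has the strong parity property if every even-sized vertex subset
admits an `X`-parity-factor. -/
def StrongParity {V : Type*} (G : SimpleGraph V) : Prop :=
  ∀ X : Set V, Even X.ncard → ∃ H, IsParityFactor G H X

private lemma zmod2_cases (x : ZMod 2) : x = 0 ∨ x = 1 := by revert x; decide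

private lemma natCast_zmod2_eq_zero_iff (n : ℕ) : (n : ZMod 2) = 0 ↔ Even n := by
  rw [ZMod.natCast_eq_zero_iff, ← even_iff_two_dvd]

private lemma nbr_symmDiff {V : Type*} (A B : SimpleGraph V) (v : V) :
    (symmDiff A B).neighborSet v = symmDiff (A.neighborSet v) (B.neighborSet v) := by
  ext w; simp [symmDiff_def, Set.mem_symmDiff, mem_neighborSet]

private lemma ncard_symmDiff_parity {V : Type*} [Fintype V] (s t : Set V) :
    (((symmDiff s t).ncard : ZMod 2)) = s.ncard + t.ncard := by
  have h1 : symmDiff s t = (s \ t) ∪ (t \ s) := symmDiff_def s t ▸ rfl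
  have hd : Disjoint (s \ t) (t \ s) := disjoint_sdiff_sdiff
  have e1 : s.ncard = (s \ t).ncard + (s ∩ t).ncard := by
    rw [← Set.ncard_union_eq Set.disjoint_sdiff_inter (Set.toFinite _) (Set.toFinite _),
      Set.diff_union_inter]
  have e2 : t.ncard = (t \ s).ncard + (t ∩ s).ncard := by
    rw [← Set.ncard_union_eq Set.disjoint_sdiff_inter (Set.toFinite _) (Set.toFinite _),
      Set.diff_union_inter]
  have e3 : (symmDiff s t).ncard = (s \ t).ncard + (t \ s).ncard := by
    rw [h1, Set.ncard_union_eq hd (Set.toFinite _) (Set.toFinite _)]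
  have hc : (t ∩ s) = (s ∩ t) := Set.inter_comm t s
  rw [e1, e2, e3, hc]; push_cast; ring_nf
  rw [show (2 : ZMod 2) = 0 from rfl, mul_zero]; ring

private lemma edeg_symmDiff {V : Type*} [Fintype V] (A B : SimpleGraph V) (v : V) :
    ((edeg (symmDiff A B) v : ZMod 2)) = edeg A v + edeg B v := by
  unfold edeg
  rw [nbr_symmDiff, ncard_symmDiff_parity]

/-- The single-edge graph. -/
private def eg {V : Type*} (u w : V) : SimpleGraph V := fromEdgeSet {s(u, w)}

private lemma eg_nbr {V : Type*} {u w : V} (h : u ≠ w) (v : V) :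
    (eg u w).neighborSet v =
      if v = u then {w} else if v = w then {u} else ∅ := by
  ext x
  simp only [eg, mem_neighborSet, fromEdgeSet_adj, Set.mem_singleton_iff, Sym2.eq, Sym2.rel_iff',
    Prod.mk.injEq, Prod.swap_prod_mk]
  split_ifs with h1 h2 <;> subst_vars <;>
    simp_all [eq_comm] <;> aesop

private lemma eg_edeg {V : Type*} [Fintype V] {u w : V} (h : u ≠ w) (v : V) :
    ((edeg (eg u w) v : ZMod 2)) =
      (if v = u then 1 else 0) + (if v = w then 1 else 0) := by
  unfold edeg
  rw [eg_nbr h]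
  split_ifs with h1 h2 <;> simp_all [Set.ncard_singleton]

private lemma eg_le {V : Type*} {H : SimpleGraph V} {u w : V} (h : H.Adj u w) :
    eg u w ≤ H := by
  intro a b hab
  simp only [eg, fromEdgeSet_adj, Set.mem_singleton_iff, Sym2.eq, Sym2.rel_iff',
    Prod.mk.injEq, Prod.swap_prod_mk] at hab
  rcases hab.1 with ⟨rfl, rfl⟩ | ⟨rfl, rfl⟩
  · exact h
  · exact h.symm

/-- Along a walk from `u` to `w`, there is a subgraph whose degree parities
are exactly the indicator of `{u} Δ {w}`. -/
private lemma walk_parity {V : Type*} [Fintype V] {H : SimpleGraph V} :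
    ∀ {u w : V} (_ : H.Walk u w), ∃ J ≤ H, ∀ v,
      ((edeg J v : ZMod 2)) = (if v = u then 1 else 0) + (if v = w then 1 else 0) := by
  intro u w p
  induction p with
  | nil =>
    refine ⟨⊥, bot_le, fun v => ?_⟩
    have h0 : edeg (⊥ : SimpleGraph V) v = 0 := by
      unfold edeg; simp [neighborSet]
    rw [h0]
    split_ifs <;> simp [CharTwo.add_self_eq_zero]
  | @cons a b w hab p ih =>
    obtain ⟨J, hJle, hJ⟩ := ih
    refine ⟨symmDiff J (eg a b), le_trans symmDiff_le_sup (sup_le hJle (eg_le hab)), fun v => ?_⟩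
    rw [edeg_symmDiff, hJ v, eg_edeg hab.ne v]
    have h2 : (2 : ZMod 2) = 0 := rfl
    linear_combination (if v = b then (1 : ZMod 2) else 0) * h2

/-- In a connected graph, every even-cardinality set is the set of odd-degree
vertices of some subgraph. -/
private lemma tjoin {V : Type*} [Fintype V] {H : SimpleGraph V} (hconn : H.Connected) :
    ∀ (n : ℕ) (Y : Set V), Y.ncard = n → Even n →
      ∃ J ≤ H, ∀ v, ((edeg J v : ZMod 2)) = if v ∈ Y then 1 else 0 := by
  intro n
  induction n using Nat.strong_induction_on with
  | _ n ih =>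
    intro Y hYn hne
    rcases Y.eq_empty_or_nonempty with rfl | ⟨u, hu⟩
    · refine ⟨⊥, bot_le, fun v => ?_⟩
      have h0 : edeg (⊥ : SimpleGraph V) v = 0 := by unfold edeg; simp [neighborSet]
      simp [h0]
    · have hfin : Y.Finite := Set.toFinite Y
      have h2 : 2 ≤ Y.ncard := by
        rcases hne with ⟨k, hk⟩
        have h1 : 1 ≤ Y.ncard := (Set.ncard_pos hfin).2 ⟨u, hu⟩
        omega
      have : (Y \ {u}).Nonempty := by
        rw [← Set.ncard_pos hfin.diff]
        rw [Set.ncard_diff_singleton_of_mem hu]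
        omega
      obtain ⟨w, hw⟩ := this
      have hwY : w ∈ Y := hw.1
      have hwu : w ≠ u := by simpa using hw.2
      set Y' := Y \ {u, w} with hY'
      have hY'card : Y'.ncard = n - 2 := by
        rw [hY', Set.ncard_diff (by simp [Set.insert_subset_iff, hu, hwY]) (by simp)]
        rw [Set.ncard_pair (Ne.symm hwu)]
        omega
      obtain ⟨J1, hJ1le, hJ1⟩ := ih (n - 2) (by omega) Y' hY'card
        (by rcases hne with ⟨k, hk⟩; subst hYn; exact ⟨k - 1, by omega⟩)
      obtain ⟨p⟩ := hconn.preconnected u w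
      obtain ⟨J2, hJ2le, hJ2⟩ := walk_parity p
      refine ⟨symmDiff J1 J2, le_trans symmDiff_le_sup (sup_le hJ1le hJ2le), fun v => ?_⟩
      rw [edeg_symmDiff, hJ1 v, hJ2 v]
      by_cases hvu : v = u
      · subst hvu
        simp [hY', hu, hwu, Ne.symm hwu]
      · by_cases hvw : v = w
        · subst hvw
          simp [hY', hwY, hvu]
        · simp [hY', hvu, hvw]

theorem binary_factor_exists {V : Type*} [Fintype V]
    (G : SimpleGraph V) (hG : G.Connected) (hδ : ∀ v, 2 ≤ edeg G v)
    (H : SimpleGraph V) (hle : H ≤ G) (hHconn : H.Connected)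
    (hHdeg : ∀ v, 1 ≤ edeg H v ∧ edeg H v < edeg G v)
    (B : V → ZMod 2) (hB : Even {v : V | B v = 1}.ncard) :
    ∃ F : SimpleGraph V, IsFactor G F ∧ ∀ v, (edeg F v : ZMod 2) = B v := by
  classical
  set D : SimpleGraph V := G \ H with hD
  have hDnbr : ∀ v, D.neighborSet v = G.neighborSet v \ H.neighborSet v := by
    intro v; ext x; simp [hD, mem_neighborSet, sdiff_adj]
  have hnsub : ∀ v, H.neighborSet v ⊆ G.neighborSet v := fun v x hx => hle hx
  have hDdeg : ∀ v, edeg D v = edeg G v - edeg H v := by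
    intro v
    unfold edeg
    rw [hDnbr v, Set.ncard_diff (hnsub v) (Set.toFinite _)]
  have hDpos : ∀ v, 1 ≤ edeg D v := by
    intro v
    have := (hHdeg v).2
    rw [hDdeg v]; omega
  -- the target parity correction set
  set Y : Set V := {v | (edeg D v : ZMod 2) + B v = 1} with hY
  have hind : ∀ v, (if v ∈ Y then (1 : ZMod 2) else 0) = (edeg D v : ZMod 2) + B v := by
    intro v
    by_cases hv : v ∈ Y
    · simp [hv]; exact ((Set.mem_setOf_eq ▸ hv) : _).symm
    · simp only [hv, if_neg, if_false]
      rcases zmod2_cases ((edeg D v : ZMod 2) + B v) with h | h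
      · exact h.symm
      · exact absurd h hv
  -- Y has even cardinality
  have hYeven : Even Y.ncard := by
    rw [← natCast_zmod2_eq_zero_iff]
    have hcard : (Y.ncard : ZMod 2) = ∑ v : V, (if v ∈ Y then (1 : ZMod 2) else 0) := by
      rw [Finset.sum_boole]
      congr 1
      rw [Set.ncard_eq_toFinset_card']
      congr 1
      ext v; simp
    rw [hcard]
    have : ∑ v : V, (if v ∈ Y then (1 : ZMod 2) else 0)
        = ∑ v : V, ((edeg D v : ZMod 2) + B v) := by
      exact Finset.sum_congr rfl fun v _ => hind v
    rw [this, Finset.sum_add_distrib]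
    have hDsum : ∑ v : V, ((edeg D v : ZMod 2)) = 0 := by
      have hedeg : ∀ v, edeg D v = D.degree v := by
        intro v
        unfold edeg
        rw [Set.ncard_eq_toFinset_card']
        rfl
      have : ∑ v : V, ((edeg D v : ZMod 2)) = ((∑ v : V, D.degree v : ℕ) : ZMod 2) := by
        push_cast
        exact Finset.sum_congr rfl fun v _ => by rw [hedeg v]
      rw [this, sum_degrees_eq_twice_card_edges]
      push_cast
      rw [show (2 : ZMod 2) = 0 from rfl, zero_mul]
    have hBsum : ∑ v : V, B v = 0 := by
      have hB1 : ∀ v, B v = if B v = 1 then (1 : ZMod 2) else 0 := by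
        intro v
        rcases zmod2_cases (B v) with h | h <;> simp [h]
      rw [Finset.sum_congr rfl fun v _ => hB1 v, Finset.sum_boole]
      have : (Finset.univ.filter fun v => B v = 1).card = {v : V | B v = 1}.ncard := by
        rw [Set.ncard_eq_toFinset_card']
        congr 1
        ext v; simp
      rw [this]
      exact (natCast_zmod2_eq_zero_iff _).2 hB
    rw [hDsum, hBsum, add_zero]
  obtain ⟨J, hJle, hJ⟩ := tjoin hHconn Y.ncard Y rfl hYeven
  refine ⟨D ⊔ J, ⟨sup_le (sdiff_le) (le_trans hJle hle), fun v => ?_⟩, fun v => ?_⟩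
  · -- min degree at least 1
    have : D.neighborSet v ⊆ (D ⊔ J).neighborSet v := by
      intro x hx; simp [mem_neighborSet] at hx ⊢; left; exact hx
    have := Set.ncard_le_ncard this (Set.toFinite _)
    calc 1 ≤ edeg D v := hDpos v
    _ ≤ edeg (D ⊔ J) v := this
  · -- parity
    have hdisj : Disjoint (D.neighborSet v) (J.neighborSet v) := by
      rw [Set.disjoint_iff]
      intro x hx
      have h1 : x ∈ D.neighborSet v := hx.1
      have h2 : x ∈ H.neighborSet v := hJle hx.2
      rw [hDnbr v] at h1
      exact h1.2 h2
    have hun : (D ⊔ J).neighborSet v = D.neighborSet v ∪ J.neighborSet v := by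
      ext x; simp [mem_neighborSet, sup_adj]
    have hsum : edeg (D ⊔ J) v = edeg D v + edeg J v := by
      unfold edeg
      rw [hun, Set.ncard_union_eq hdisj (Set.toFinite _) (Set.toFinite _)]
    rw [hsum]
    push_cast
    rw [hJ v]
    have h2 : (2 : ZMod 2) = 0 := rfl
    by_cases hv : v ∈ Y
    · rw [if_pos hv]
      have h1 : (edeg D v : ZMod 2) + B v = 1 := hv
      linear_combination h1 + (1 - B v) * h2
    · rw [if_neg hv]
      have h0 : (edeg D v : ZMod 2) + B v = 0 := by
        rcases zmod2_cases ((edeg D v : ZMod 2) + B v) with h | h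
        · exact h
        · exact absurd h hv
      linear_combination h0 - B v * h2
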